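/- Let K be a field of characteristic p ≥ 0 and let H ∈ K[x_1,…,x_n]^n be a polynomial map each of whose components is a term, i.e., H_i = c_i·x_1^{a_{i1}}⋯x_n^{a_{in}} with c_i ∈ K \ {0}. Let M ∈ Mat_n(ℤ) be the matrix with entries M_{ij} = a_{ij} = deg_{x_j} H_i. Then the components H_1,…,H_n are algebraically independent over K and det JH = 0 if and only if det M ≠ 0 in ℤ but the image of det M in K is zero. -/

import Mathlib

open MvPolynomial

/-- The Jacobian matrix of a polynomial map. -/
noncomputable def jac {K : Type*} [CommRing K] {m n : ℕ}
    (H : Fin m → MvPolynomial (Fin n) K) :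
    Matrix (Fin m) (Fin n) (MvPolynomial (Fin n) K) :=
  Matrix.of fun i j => pderiv j (H i)

/-- The rank of the Jacobian matrix, taken over the rational function field. -/
noncomputable def jacRank {K : Type*} [Field K] {m n : ℕ}
    (H : Fin m → MvPolynomial (Fin n) K) : ℕ :=
  ((jac H).map (algebraMap (MvPolynomial (Fin n) K)
    (FractionRing (MvPolynomial (Fin n) K)))).rank

section Aux

open Matrix

lemma sum_single_apply' {n : ℕ} (f : Fin n → ℕ) (k : Fin n) :
    (∑ j, Finsupp.single j (f j)) k = f k := by
  simp [Finsupp.finset_sum_apply, Finsupp.single_apply]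

lemma prod_X_pow_eq_monomial' {K : Type*} [CommRing K] {n : ℕ} (c : K) (f : Fin n → ℕ) :
    C c * ∏ j, (X j : MvPolynomial (Fin n) K) ^ f j
      = monomial (∑ j, Finsupp.single j (f j)) c := by
  rw [monomial_eq, Finsupp.prod_fintype _ _ (fun i => pow_zero _)]
  simp [sum_single_apply']

lemma pderiv_monomial_mul_X' {K : Type*} [CommRing K] {n : ℕ} (c : K) (s : Fin n →₀ ℕ)
    (j : Fin n) :
    pderiv j (monomial s c : MvPolynomial (Fin n) K) * X j
      = monomial s c * C ((s j : K)) := by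
  have hX : (X j : MvPolynomial (Fin n) K) = monomial (Finsupp.single j 1) 1 := by
    rw [← pow_one (X j), X_pow_eq_monomial]
  have hC : (C ((s j : K)) : MvPolynomial (Fin n) K) = monomial 0 ((s j : K)) := by
    simp [monomial_zero']
  rw [pderiv_monomial, hX, hC, monomial_mul, monomial_mul]
  rcases Nat.eq_zero_or_pos (s j) with h | h
  · simp [h]
  · rw [tsub_add_cancel_of_le (Finsupp.single_le_iff.mpr h)]
    simp [mul_comm]

lemma prod_monomial' {K : Type*} [CommRing K] {n : ℕ} {ι : Type*} (t : Finset ι)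
    (u : ι → (Fin n →₀ ℕ)) (b : ι → K) :
    ∏ i ∈ t, (monomial (u i) (b i) : MvPolynomial (Fin n) K)
      = monomial (∑ i ∈ t, u i) (∏ i ∈ t, b i) := by
  induction t using Finset.cons_induction with
  | empty => simp [monomial_zero']
  | cons i t hi ih => rw [Finset.prod_cons, ih, monomial_mul, Finset.sum_cons, Finset.prod_cons]

lemma det_jac_identity' {K : Type*} [Field K] {n : ℕ}
    (c : Fin n → K) (a : Fin n → Fin n → ℕ)
    (H : Fin n → MvPolynomial (Fin n) K)
    (hH : ∀ i, H i = C (c i) * ∏ j, X j ^ a i j) :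
    (jac H).det * ∏ j, (X j : MvPolynomial (Fin n) K)
      = (∏ i, H i) * C ((Matrix.of fun i j => ((a i j : K))).det) := by
  have hmon : ∀ i, H i = monomial (∑ j, Finsupp.single j (a i j)) (c i) := fun i => by
    rw [hH i, prod_X_pow_eq_monomial']
  have h1 : (jac H) * Matrix.diagonal X = Matrix.of fun i j => H i * C ((a i j : K)) := by
    apply Matrix.ext; intro i j
    rw [Matrix.mul_diagonal]
    show pderiv j (H i) * X j = H i * C ((a i j : K))
    rw [hmon i, pderiv_monomial_mul_X', sum_single_apply']
  have h2 := congrArg Matrix.det h1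
  rw [Matrix.det_mul, Matrix.det_diagonal] at h2
  rw [h2]
  have h3 : (Matrix.of fun i j => H i * C ((a i j : K))).det
      = (∏ i, H i) * (Matrix.of fun i j => (C ((a i j : K)) : MvPolynomial (Fin n) K)).det :=
    Matrix.det_mul_column _ _
  rw [h3]
  congr 1
  have : (Matrix.of fun i j => (C ((a i j : K)) : MvPolynomial (Fin n) K))
      = (C : K →+* MvPolynomial (Fin n) K).mapMatrix (Matrix.of fun i j => ((a i j : K))) := by
    apply Matrix.ext; intro i j; rfl
  rw [this, ← RingHom.map_det]

lemma exp_injective' {n : ℕ} (a : Fin n → Fin n → ℕ)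
    (M : Matrix (Fin n) (Fin n) ℤ) (hM : ∀ i j, M i j = (a i j : ℤ)) (hdet : M.det ≠ 0)
    (α β : Fin n →₀ ℕ)
    (h : (∑ i, α i • ∑ j, Finsupp.single j (a i j)) = ∑ i, β i • ∑ j, Finsupp.single j (a i j)) :
    α = β := by
  set Mq : Matrix (Fin n) (Fin n) ℚ := M.map ((↑) : ℤ → ℚ) with hMq
  have hdq : Mq.det ≠ 0 := by
    have : Mq.det = ((M.det : ℤ) : ℚ) := ((Int.castRingHom ℚ).map_det M).symm
    rw [this]
    exact_mod_cast hdet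
  have hunit : IsUnit Mq := (Matrix.isUnit_iff_isUnit_det Mq).mpr (isUnit_iff_ne_zero.mpr hdq)
  have hinj := Matrix.vecMul_injective_iff_isUnit.mpr hunit
  have hv : (fun i => ((α i : ℚ))) ᵥ* Mq = (fun i => ((β i : ℚ))) ᵥ* Mq := by
    funext j
    simp only [Matrix.vecMul, dotProduct, hMq, Matrix.map_apply, hM]
    have h1 : ((∑ i, α i • ∑ j, Finsupp.single j (a i j)) j : ℕ)
        = ∑ i, α i * a i j := by
      simp [Finsupp.finset_sum_apply, Finsupp.single_apply]
    have h2 : ((∑ i, β i • ∑ j, Finsupp.single j (a i j)) j : ℕ)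
        = ∑ i, β i * a i j := by
      simp [Finsupp.finset_sum_apply, Finsupp.single_apply]
    have := congrArg (fun f => f j) h
    simp only [h1, h2] at this
    have : ((∑ i, α i * a i j : ℕ) : ℚ) = ((∑ i, β i * a i j : ℕ) : ℚ) := by exact_mod_cast this
    push_cast at this
    convert this using 2 <;> simp
  have := hinj hv
  ext i
  exact_mod_cast congrFun this i

lemma aeval_H_monomial' {K : Type*} [Field K] {n : ℕ}
    (c : Fin n → K) (a : Fin n → Fin n → ℕ)
    (H : Fin n → MvPolynomial (Fin n) K)
    (hmon : ∀ i, H i = monomial (∑ j, Finsupp.single j (a i j)) (c i))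
    (α : Fin n →₀ ℕ) (b : K) :
    aeval H (monomial α b)
      = monomial (∑ i, α i • ∑ j, Finsupp.single j (a i j)) (b * ∏ i, c i ^ α i) := by
  rw [aeval_monomial, Finsupp.prod_fintype _ _ (fun i => pow_zero _)]
  have : ∀ i, H i ^ α i
      = monomial (α i • ∑ j, Finsupp.single j (a i j)) (c i ^ α i) := fun i => by
    rw [hmon i, monomial_pow]
  simp_rw [this]
  rw [prod_monomial']
  simp [algebraMap_eq, C_mul_monomial]

lemma algIndep_of_det_ne_zero' {K : Type*} [Field K] {n : ℕ}
    (c : Fin n → K) (hc : ∀ i, c i ≠ 0) (a : Fin n → Fin n → ℕ)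
    (H : Fin n → MvPolynomial (Fin n) K)
    (hmon : ∀ i, H i = monomial (∑ j, Finsupp.single j (a i j)) (c i))
    (M : Matrix (Fin n) (Fin n) ℤ) (hM : ∀ i j, M i j = (a i j : ℤ)) (hdet : M.det ≠ 0) :
    AlgebraicIndependent K H := by
  rw [algebraicIndependent_iff]
  intro p hp
  by_contra hp0
  obtain ⟨α₀, hα₀⟩ := (MvPolynomial.support_nonempty.mpr hp0)
  set T : (Fin n →₀ ℕ) → (Fin n →₀ ℕ) := fun α => ∑ i, α i • ∑ j, Finsupp.single j (a i j)
    with hT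
  have hs : aeval H p = ∑ α ∈ p.support, monomial (T α) (coeff α p * ∏ i, c i ^ α i) := by
    conv_lhs => rw [p.as_sum]
    rw [map_sum]
    exact Finset.sum_congr rfl fun α _ => aeval_H_monomial' c a H hmon α (coeff α p)
  have hco := congrArg (coeff (T α₀)) hs
  rw [hp, coeff_zero] at hco
  rw [coeff_sum] at hco
  rw [Finset.sum_congr rfl (fun α _ => coeff_monomial (T α₀) (T α) _)] at hco
  have heq : ∑ α ∈ p.support, (if T α = T α₀ then coeff α p * ∏ i, c i ^ α i else 0)
      = coeff α₀ p * ∏ i, c i ^ α₀ i := by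
    rw [Finset.sum_eq_single_of_mem α₀ hα₀ (fun β _ hβ => by
      rw [if_neg (fun hTe => hβ (exp_injective' a M hM hdet β α₀ hTe))]), if_pos rfl]
  rw [heq] at hco
  have : coeff α₀ p ≠ 0 := mem_support_iff.mp hα₀
  exact this (by
    have hprod : (∏ i, c i ^ α₀ i) ≠ 0 := Finset.prod_ne_zero_iff.mpr fun i _ => pow_ne_zero _ (hc i)
    field_simp at hco
    exact (mul_eq_zero.mp hco.symm).resolve_right hprod)

lemma det_ne_zero_of_algIndep' {K : Type*} [Field K] {n : ℕ}
    (c : Fin n → K) (hc : ∀ i, c i ≠ 0) (a : Fin n → Fin n → ℕ)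
    (H : Fin n → MvPolynomial (Fin n) K)
    (hmon : ∀ i, H i = monomial (∑ j, Finsupp.single j (a i j)) (c i))
    (M : Matrix (Fin n) (Fin n) ℤ) (hM : ∀ i j, M i j = (a i j : ℤ))
    (hind : AlgebraicIndependent K H) : M.det ≠ 0 := by
  intro hdet0
  obtain ⟨v, hv, hvM⟩ := Matrix.exists_vecMul_eq_zero_iff.mpr hdet0
  set lp : Fin n → ℕ := fun i => (v i).toNat with hlp
  set lm : Fin n → ℕ := fun i => (-v i).toNat with hlm
  have hvi : ∀ i, (lp i : ℤ) - (lm i : ℤ) = v i := fun i => Int.toNat_sub_toNat_neg (v i)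
  set pp : Fin n →₀ ℕ := Finsupp.equivFunOnFinite.symm lp with hpp
  set pm : Fin n →₀ ℕ := Finsupp.equivFunOnFinite.symm lm with hpm
  have hppa : ∀ i, pp i = lp i := fun i => rfl
  have hpma : ∀ i, pm i = lm i := fun i => rfl
  have hTeq : (∑ i, pp i • ∑ j, Finsupp.single j (a i j))
      = ∑ i, pm i • ∑ j, Finsupp.single j (a i j) := by
    ext j
    have hz := congrFun hvM j
    simp only [Matrix.vecMul, dotProduct, hM, Pi.zero_apply] at hz
    have hzz : ∑ i, (lp i : ℤ) * a i j = ∑ i, (lm i : ℤ) * a i j := by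
      have : ∑ i, ((lp i : ℤ) - (lm i : ℤ)) * (a i j : ℤ) = 0 := by
        rw [Finset.sum_congr rfl (fun i _ => by rw [hvi i])]; exact hz
      rw [Finset.sum_congr rfl (fun (i : Fin n) (_ : i ∈ Finset.univ) => sub_mul ((lp i : ℤ)) _ _),
        Finset.sum_sub_distrib, sub_eq_zero] at this
      exact this
    have hnat : ∑ i, lp i * a i j = ∑ i, lm i * a i j := by exact_mod_cast hzz
    simp only [Finsupp.finset_sum_apply, Finsupp.smul_apply, Finsupp.single_apply, hppa, hpma]
    simp only [Finset.sum_ite_eq', Finset.mem_univ, if_true, smul_eq_mul]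
    exact hnat
  set P : MvPolynomial (Fin n) K :=
    monomial pp (∏ i, c i ^ lm i) - monomial pm (∏ i, c i ^ lp i) with hP
  have haev : aeval H P = 0 := by
    rw [hP, map_sub, aeval_H_monomial' c a H hmon, aeval_H_monomial' c a H hmon, hTeq]
    have : (∏ i, c i ^ lm i) * (∏ i, c i ^ pp i) = (∏ i, c i ^ lp i) * (∏ i, c i ^ pm i) := by
      simp only [hppa, hpma]; ring
    rw [this, sub_self]
  have hP0 : P = 0 := algebraicIndependent_iff.mp hind P haev
  have hne : pp ≠ pm := by
    intro hEq
    apply hv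
    funext i
    have h2 : lp i = lm i := congrFun (congrArg Finsupp.toFun hEq) i
    have h3 := hvi i
    simp only [Pi.zero_apply]
    omega
  have hcoeff := congrArg (coeff pp) hP0
  rw [hP, coeff_sub, coeff_monomial, coeff_monomial, if_pos rfl,
    if_neg (Ne.symm hne ∘ Eq.symm ∘ Eq.symm)] at hcoeff
  rw [sub_zero, coeff_zero] at hcoeff
  exact (Finset.prod_ne_zero_iff.mpr fun i _ => pow_ne_zero _ (hc i)) hcoeff

end Aux

/-- For a polynomial map `H` whose components are terms `Hᵢ = cᵢ·x₁^{a_{i1}}⋯xₙ^{a_{in}}`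
(with `cᵢ ≠ 0`), letting `M ∈ Matₙ(ℤ)` be the matrix of exponents `M_{ij} = a_{ij}`,
the components of `H` are algebraically independent over `K` with `det JH = 0` if and
only if `det M ≠ 0` in `ℤ` while the image of `det M` in `K` is zero. -/
theorem monomial_map_algIndep_and_det_zero_iff {K : Type*} [Field K] {n : ℕ}
    (c : Fin n → K) (hc : ∀ i, c i ≠ 0) (a : Fin n → Fin n → ℕ)
    (H : Fin n → MvPolynomial (Fin n) K)
    (hH : ∀ i, H i = C (c i) * ∏ j, X j ^ a i j)
    (M : Matrix (Fin n) (Fin n) ℤ) (hM : ∀ i j, M i j = (a i j : ℤ)) :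
    (AlgebraicIndependent K H ∧ (jac H).det = 0) ↔
      (M.det ≠ 0 ∧ ((M.det : ℤ) : K) = 0) := by
  have hmon : ∀ i, H i = monomial (∑ j, Finsupp.single j (a i j)) (c i) := fun i => by
    rw [hH i, prod_X_pow_eq_monomial']
  have hHne : ∀ i, H i ≠ 0 := fun i => by
    rw [hmon i]
    simp [MvPolynomial.monomial_eq_zero, hc i]
  have hA : ((Matrix.of fun i j => ((a i j : K))).det) = ((M.det : ℤ) : K) := by
    have h : (Matrix.of fun i j => ((a i j : K))) = (Int.castRingHom K).mapMatrix M := by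
      apply Matrix.ext; intro i j
      simp [hM, RingHom.mapMatrix_apply]
    rw [h, ← RingHom.map_det]
    rfl
  have hkey := det_jac_identity' c a H hH
  rw [hA] at hkey
  have hdetiff : (jac H).det = 0 ↔ ((M.det : ℤ) : K) = 0 := by
    constructor
    · intro h
      rw [h, zero_mul] at hkey
      have hprod : (∏ i, H i) ≠ 0 := Finset.prod_ne_zero_iff.mpr fun i _ => hHne i
      have h2 := (mul_eq_zero.mp hkey.symm).resolve_left hprod
      rwa [C_eq_zero] at h2
    · intro h
      rw [h, map_zero, mul_zero] at hkey
      have hX : (∏ j, (X j : MvPolynomial (Fin n) K)) ≠ 0 :=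
        Finset.prod_ne_zero_iff.mpr fun j _ => X_ne_zero j
      exact (mul_eq_zero.mp hkey).resolve_right hX
  constructor
  · rintro ⟨hind, hdet⟩
    exact ⟨det_ne_zero_of_algIndep' c hc a H hmon M hM hind, hdetiff.mp hdet⟩
  · rintro ⟨h1, h2⟩
    exact ⟨algIndep_of_det_ne_zero' c hc a H hmon M hM h1, hdetiff.mpr h2⟩
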